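/- Let n ≥ 2 be an integer, κ < 0 a real number, ω_n > 0 a constant, and let V : (0, ∞) → (0, ∞) be a differentiable function such that Q(s) := V(s)/B^κ_n(s) is non-decreasing on (0, ∞) and sup_{R > 0} Q(R) < ∞. Then limsup_{R → ∞} [ ∫_{R/2}^{R} f_R'(s)²·V'(s) ds / ∫_{R/2}^{R} f_R(s)²·V'(s) ds ] ≤ −(n−1)²·κ/4. -/

import Mathlib

open Real Filter MeasureTheory intervalIntegral Topology

namespace Stmt15

noncomputable def W (a ω : ℝ) (m : ℕ) : ℝ → ℝ := fun s => ω * (Real.sinh (a*s)/a)^(m+1)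

noncomputable def W' (a ω : ℝ) (m : ℕ) : ℝ → ℝ := fun s =>
  ω * (((m:ℝ)+1) * (Real.sinh (a*s)/a)^m * Real.cosh (a*s))

variable {a ω : ℝ} {m : ℕ}

lemma sinh_aux (ha : a ≠ 0) (s : ℝ) :
    HasDerivAt (fun s : ℝ => Real.sinh (a*s)/a) (Real.cosh (a*s)) s := by
  have h := ((Real.hasDerivAt_sinh (a*s)).comp s ((hasDerivAt_id s).const_mul a)).div_const a
  simp only [Function.comp, mul_one] at h
  refine h.congr_deriv ?_
  field_simp

lemma hasDerivAt_W (ha : a ≠ 0) (s : ℝ) : HasDerivAt (W a ω m) (W' a ω m s) s := by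
  have h := ((sinh_aux ha s).pow (m+1)).const_mul ω
  simp only [Nat.add_sub_cancel] at h
  refine h.congr_deriv ?_
  simp [W']

lemma W_pos (ha : 0 < a) (hω : 0 < ω) {s : ℝ} (hs : 0 < s) : 0 < W a ω m s := by
  have : 0 < Real.sinh (a * s) := Real.sinh_pos_iff.2 (by positivity)
  unfold W; positivity

lemma W_continuous (ha : a ≠ 0) : Continuous (W a ω m) := by
  unfold W; fun_prop

lemma W'_nonneg (ha : 0 < a) (hω : 0 < ω) {s : ℝ} (hs : 0 ≤ s) : 0 ≤ W' a ω m s := by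
  have h1 : 0 ≤ Real.sinh (a * s) := by
    rcases eq_or_lt_of_le hs with h | h
    · simp [← h]
    · exact (Real.sinh_pos_iff.2 (by positivity)).le
  have h2 := (Real.cosh_pos (a*s)).le
  unfold W'; positivity

/-- `W' ≥ (m+1) a W` on `s ≥ 0`. -/
lemma W'_ge (ha : 0 < a) (hω : 0 < ω) {s : ℝ} (hs : 0 ≤ s) :
    ((m:ℝ)+1) * a * W a ω m s ≤ W' a ω m s := by
  have h1 : 0 ≤ Real.sinh (a * s) := by
    rcases eq_or_lt_of_le hs with h | h
    · simp [← h]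
    · exact (Real.sinh_pos_iff.2 (by positivity)).le
  have h2 : Real.sinh (a*s) ≤ Real.cosh (a*s) := by
    nlinarith [Real.cosh_sub_sinh (a*s), Real.exp_pos (-(a*s))]
  have h3 : 0 ≤ (Real.sinh (a*s)/a)^m := by positivity
  have key : ((m:ℝ)+1) * a * W a ω m s
      = ω * (((m:ℝ)+1) * (Real.sinh (a*s)/a)^m * Real.sinh (a*s)) := by
    unfold W; have := ha.ne'; rw [pow_succ]; field_simp
  rw [key]
  unfold W'
  have : 0 ≤ ω * (((m:ℝ)+1) * (Real.sinh (a*s)/a)^m) := by positivity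
  nlinarith [this, h2]

/-- coth is antitone on positives. -/
lemma coth_antitone {x y : ℝ} (hy : 0 < y) (hxy : y ≤ x) :
    Real.cosh x / Real.sinh x ≤ Real.cosh y / Real.sinh y := by
  have hx : 0 < x := lt_of_lt_of_le hy hxy
  have hsx : 0 < Real.sinh x := Real.sinh_pos_iff.2 hx
  have hsy : 0 < Real.sinh y := Real.sinh_pos_iff.2 hy
  rw [div_le_div_iff₀ hsx hsy]
  have h := Real.sinh_sub x y
  have h2 : 0 ≤ Real.sinh (x - y) := by
    rcases eq_or_lt_of_le hxy with h' | h'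
    · simp [← h']
    · exact (Real.sinh_pos_iff.2 (by linarith)).le
  nlinarith [h, h2]

/-- `W' ≤ (m+1) a coth(a r) W` for `s ≥ r > 0`. -/
lemma W'_le (ha : 0 < a) (hω : 0 < ω) {r s : ℝ} (hr : 0 < r) (hs : r ≤ s) :
    W' a ω m s ≤ ((m:ℝ)+1) * a * (Real.cosh (a*r) / Real.sinh (a*r)) * W a ω m s := by
  have hs0 : 0 < s := lt_of_lt_of_le hr hs
  have hsx : 0 < Real.sinh (a*s) := Real.sinh_pos_iff.2 (by positivity)
  have hsr : 0 < Real.sinh (a*r) := Real.sinh_pos_iff.2 (by positivity)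
  have hcoth := coth_antitone (by positivity : (0:ℝ) < a*r)
    (by nlinarith : a*r ≤ a*s)
  have hch : Real.cosh (a*s) ≤ (Real.cosh (a*r) / Real.sinh (a*r)) * Real.sinh (a*s) := by
    rw [div_mul_eq_mul_div, le_div_iff₀ hsr]
    have := (div_le_div_iff₀ hsx hsr).1 hcoth
    linarith
  have key : ((m:ℝ)+1) * a * (Real.cosh (a*r) / Real.sinh (a*r)) * W a ω m s
      = ω * (((m:ℝ)+1) * (Real.sinh (a*s)/a)^m * ((Real.cosh (a*r) / Real.sinh (a*r)) * Real.sinh (a*s))) := by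
    unfold W; have := ha.ne'; rw [pow_succ]; field_simp
  rw [key]
  unfold W'
  have h3 : 0 ≤ ω * (((m:ℝ)+1) * (Real.sinh (a*s)/a)^m) := by
    have h1 : 0 ≤ Real.sinh (a * s) := hsx.le
    positivity
  nlinarith [h3, hch]

end Stmt15

namespace Stmt15

variable {a ω : ℝ} {m : ℕ}

noncomputable def B (a ω : ℝ) (m : ℕ) : ℝ → ℝ := fun s => ∫ t in (0:ℝ)..s, W a ω m t

lemma hasDerivAt_B (ha : a ≠ 0) (s : ℝ) : HasDerivAt (B a ω m) (W a ω m s) s :=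
  ((W_continuous ha).integral_hasStrictDerivAt 0 s).hasDerivAt

lemma B_pos (ha : 0 < a) (hω : 0 < ω) {s : ℝ} (hs : 0 < s) : 0 < B a ω m s :=
  intervalIntegral_pos_of_pos_on ((W_continuous ha.ne').intervalIntegrable _ _)
    (fun x hx => W_pos ha hω hx.1) hs

lemma W_zero : W a ω m 0 = 0 := by simp [W]

lemma B_le (ha : 0 < a) (hω : 0 < ω) {s : ℝ} (hs : 0 ≤ s) :
    ((m:ℝ)+1) * a * B a ω m s ≤ W a ω m s := by
  set h : ℝ → ℝ := fun t => W a ω m t - ((m:ℝ)+1) * a * B a ω m t with hh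
  have hd : ∀ t : ℝ, HasDerivAt h (W' a ω m t - ((m:ℝ)+1) * a * W a ω m t) t := fun t =>
    (hasDerivAt_W ha.ne' t).sub ((hasDerivAt_B ha.ne' t).const_mul _)
  have hmono : MonotoneOn h (Set.Ici (0:ℝ)) := by
    apply monotoneOn_of_deriv_nonneg (convex_Ici 0)
      (fun t _ => (hd t).differentiableAt.continuousAt.continuousWithinAt)
      (fun t _ => (hd t).differentiableAt.differentiableWithinAt)
    intro t ht
    rw [interior_Ici] at ht
    rw [(hd t).deriv]
    have := W'_ge (m := m) ha hω (le_of_lt ht)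
    linarith
  have h0 : h 0 = 0 := by simp [hh, W_zero, B]
  have := hmono Set.self_mem_Ici hs hs
  rw [h0] at this
  simp only [hh] at this
  linarith

lemma tendsto_coth : Tendsto (fun x => Real.cosh x / Real.sinh x) atTop (𝓝 1) := by
  have hlim : Tendsto (fun x : ℝ => Real.exp (-(2*x))) atTop (𝓝 0) :=
    Real.tendsto_exp_neg_atTop_nhds_zero.comp (tendsto_id.const_mul_atTop two_pos)
  have hmain : Tendsto (fun x : ℝ => (1 + Real.exp (-(2*x)))/(1 - Real.exp (-(2*x))))
      atTop (𝓝 1) := by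
    have h1 : Tendsto (fun x : ℝ => 1 + Real.exp (-(2*x))) atTop (𝓝 (1+0)) :=
      tendsto_const_nhds.add hlim
    have h2 : Tendsto (fun x : ℝ => 1 - Real.exp (-(2*x))) atTop (𝓝 (1-0)) :=
      tendsto_const_nhds.sub hlim
    have h := h1.div h2 (by norm_num)
    simp only [add_zero, sub_zero, div_one] at h
    exact h
  apply hmain.congr'
  filter_upwards [eventually_gt_atTop 0] with x hx
  have hsp : 0 < Real.sinh x := Real.sinh_pos_iff.2 hx
  have he : 0 < Real.exp (-(2*x)) := Real.exp_pos _
  have h1 : Real.exp (-(2*x)) < 1 := Real.exp_lt_one_iff.2 (by linarith)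
  have hcs := Real.cosh_sub_sinh x
  have hca := Real.cosh_add_sinh x
  have hee : Real.exp (-(2*x)) * Real.exp x = Real.exp (-x) := by
    rw [← Real.exp_add]; ring_nf
  rw [div_eq_div_iff (by linarith) hsp.ne']
  nlinarith [hcs, hca, hee]

lemma integral_sin_sq {R : ℝ} (hR : 0 < R) :
    (∫ s in (R/2)..R, Real.sin (2*π*(s-R/2)/R)^2) = R/4 := by
  have hπ : (0:ℝ) < π := Real.pi_pos
  set F : ℝ → ℝ := fun s => s/2 - R/(8*π) * Real.sin (4*π*(s-R/2)/R) with hF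
  have hd : ∀ s : ℝ, HasDerivAt F (Real.sin (2*π*(s-R/2)/R)^2) s := by
    intro s
    have hg : HasDerivAt (fun s : ℝ => 4*π*(s-R/2)/R) (4*π/R) s := by
      have := (((hasDerivAt_id s).sub_const (R/2)).const_mul (4*π)).div_const R
      simpa using this
    have hsin : HasDerivAt (fun s : ℝ => Real.sin (4*π*(s-R/2)/R))
        (Real.cos (4*π*(s-R/2)/R) * (4*π/R)) s := by
      exact (Real.hasDerivAt_sin (4*π*(s-R/2)/R)).comp s hg
    have hder := ((hasDerivAt_id s).div_const 2).sub (hsin.const_mul (R/(8*π)))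
    have heq : 1/2 - R/(8*π) * (Real.cos (4*π*(s-R/2)/R) * (4*π/R))
        = Real.sin (2*π*(s-R/2)/R)^2 := by
      have h2 : 4*π*(s-R/2)/R = 2 * (2*π*(s-R/2)/R) := by ring
      have hRne : R ≠ 0 := hR.ne'
      have hπne : π ≠ 0 := hπ.ne'
      have h3 : R/(8*π) * (Real.cos (4*π*(s-R/2)/R) * (4*π/R))
          = Real.cos (4*π*(s-R/2)/R) / 2 := by field_simp; ring
      rw [h3, h2, Real.cos_two_mul]
      have hs := Real.sin_sq_add_cos_sq (2*π*(s-R/2)/R)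
      linarith
    rw [← heq]
    exact hder
  have hint : IntervalIntegrable (fun s => Real.sin (2*π*(s-R/2)/R)^2) volume (R/2) R := by
    apply Continuous.intervalIntegrable; fun_prop (disch := intros; positivity)
  rw [integral_eq_sub_of_hasDerivAt (fun s _ => hd s) hint]
  have e1 : 4*π*(R-R/2)/R = 2*π := by field_simp; ring
  have e2 : 4*π*(R/2-R/2)/R = 0 := by simp
  simp only [hF, e1, e2, Real.sin_two_pi, Real.sin_zero]
  ring

end Stmt15

namespace Stmt15
variable {a ω : ℝ} {m : ℕ}
lemma W'_continuous (ha : a ≠ 0) : Continuous (W' a ω m) := by unfold W'; fun_prop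
end Stmt15

set_option maxHeartbeats 4000000 in
open Real in
/-- For n ≥ 2, κ < 0, ω_n > 0, V : (0,∞) → (0,∞) differentiable
with Q(s) := V(s)/B^κ_n(s) non-decreasing on (0, ∞) and sup_{R>0} Q(R) < ∞,
and f_R(s) = sin(2π(s − R/2)/R)/(S^κ_n(s))^{1/2}:
limsup_{R → ∞} [∫_{R/2}^{R} f_R'(s)²·V'(s) ds / ∫_{R/2}^{R} f_R(s)²·V'(s) ds]
  ≤ −(n−1)²·κ/4. -/
theorem stmt_15 (n : ℕ) (hn : 2 ≤ n) (κ : ℝ) (hκ : κ < 0) (ω : ℝ) (hω : 0 < ω)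
    (S : ℝ → ℝ)
    (hS : ∀ t : ℝ, S t = Real.sinh (Real.sqrt (-κ) * t) / Real.sqrt (-κ))
    (Sn : ℝ → ℝ) (hSn : ∀ R : ℝ, Sn R = ω * (S R) ^ (n - 1))
    (Bn : ℝ → ℝ) (hBn : ∀ R : ℝ, Bn R = ∫ s in (0:ℝ)..R, Sn s)
    (V : ℝ → ℝ) (hVpos : ∀ s > (0:ℝ), 0 < V s)
    (hVdiff : ∀ s > (0:ℝ), DifferentiableAt ℝ V s)
    (Q : ℝ → ℝ) (hQ : ∀ s : ℝ, Q s = V s / Bn s)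
    (hQmono : MonotoneOn Q (Set.Ioi (0:ℝ)))
    (hQbdd : ∃ C : ℝ, ∀ R > (0:ℝ), Q R ≤ C)
    (f : ℝ → ℝ → ℝ)
    (hf : ∀ R s : ℝ, f R s =
        Real.sin (2 * π * (s - R / 2) / R) / Real.sqrt (Sn s)) :
    Filter.limsup
        (fun R =>
          (∫ s in (R / 2)..R, (deriv (f R) s) ^ 2 * deriv V s) /
            (∫ s in (R / 2)..R, (f R s) ^ 2 * deriv V s))
        Filter.atTop ≤ -((n : ℝ) - 1) ^ 2 * κ / 4 := by
  have hπ : (0:ℝ) < π := Real.pi_pos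
  obtain ⟨m, rfl⟩ : ∃ m, n = m + 2 := ⟨n - 2, by omega⟩
  set a := Real.sqrt (-κ) with ha_def
  have ha : 0 < a := Real.sqrt_pos.2 (by linarith)
  have ha2 : a^2 = -κ := Real.sq_sqrt (by linarith)
  have hSnW : Sn = Stmt15.W a ω m := by
    funext R; rw [hSn R, hS R]; norm_num [Stmt15.W]
  subst hSnW
  have hBnB : Bn = Stmt15.B a ω m := funext fun R => hBn R
  subst hBnB
  obtain ⟨C₀, hC₀⟩ := hQbdd
  set C := max C₀ 1 with hCdef
  have hCpos : (0:ℝ) < C := lt_of_lt_of_le one_pos (le_max_right _ _)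
  have hC : ∀ R > (0:ℝ), Q R ≤ C := fun R hR => (hC₀ R hR).trans (le_max_left _ _)
  set μ := ((m:ℝ)+1) * a / 2 with hμdef
  have hμ : 0 < μ := by positivity
  have hBpos : ∀ s : ℝ, 0 < s → 0 < Stmt15.B a ω m s := fun s hs => Stmt15.B_pos ha hω hs
  have hWpos : ∀ s : ℝ, 0 < s → 0 < Stmt15.W a ω m s := fun s hs => Stmt15.W_pos ha hω hs
  have hQpos : ∀ s : ℝ, 0 < s → 0 < Q s := fun s hs => by
    rw [hQ s]; exact div_pos (hVpos s hs) (hBpos s hs)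
  set q : ℝ → ℝ := fun s =>
    (deriv V s * Stmt15.B a ω m s - V s * Stmt15.W a ω m s)/(Stmt15.B a ω m s)^2 with hqdef
  have hQd : ∀ s : ℝ, 0 < s → HasDerivAt Q (q s) s := by
    intro s hs
    have h := ((hVdiff s hs).hasDerivAt.div (Stmt15.hasDerivAt_B (ω := ω) (m := m) ha.ne' s) (hBpos s hs).ne')
    exact h.congr_of_eventuallyEq (Filter.Eventually.of_forall fun x => hQ x)
  have hq0 : ∀ s : ℝ, 0 < s → 0 ≤ q s := by
    intro s hs
    have hT := hasDerivAt_iff_tendsto_slope.1 (hQd s hs)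
    have hT2 := hT.mono_left (nhdsWithin_mono s (fun x (hx : x ∈ Set.Ioi s) => ne_of_gt hx))
    refine ge_of_tendsto hT2 ?_
    filter_upwards [self_mem_nhdsWithin] with x hx
    have hxs : s < x := hx
    have hmono := hQmono (Set.mem_Ioi.2 hs) (Set.mem_Ioi.2 (hs.trans hxs)) hxs.le
    rw [slope_def_field]
    exact div_nonneg (by linarith) (by linarith)
  have hVd' : ∀ s : ℝ, 0 < s →
      HasDerivAt V (q s * Stmt15.B a ω m s + Q s * Stmt15.W a ω m s) s := by
    intro s hs
    have hprod := (hQd s hs).mul (Stmt15.hasDerivAt_B (ω := ω) (m := m) ha.ne' s)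
    have : HasDerivAt V (q s * Stmt15.B a ω m s + Q s * Stmt15.W a ω m s) s := by
      apply hprod.congr_of_eventuallyEq
      filter_upwards [Ioi_mem_nhds hs] with x hx
      rw [Pi.mul_apply, hQ x, div_mul_cancel₀ _ (hBpos x hx).ne']
    exact this
  have hderivV : ∀ s : ℝ, 0 < s →
      deriv V s = q s * Stmt15.B a ω m s + Q s * Stmt15.W a ω m s := fun s hs =>
    (hVd' s hs).deriv
  have hV'0 : ∀ s : ℝ, 0 < s → 0 ≤ deriv V s := by
    intro s hs
    rw [hderivV s hs]
    have := hq0 s hs; have := (hBpos s hs).le; have := (hQpos s hs).le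
    have := (hWpos s hs).le
    positivity
  set G : ℝ → ℝ := fun R => (μ * (Real.cosh (a*(R/2))/Real.sinh (a*(R/2))))^2 +
      ((2*π/R)^2 + 2*(2*π/R)*μ*(Real.cosh (a*(R/2))/Real.sinh (a*(R/2)))) *
        ((C/(2*μ))/R + C/2) * (4/(Q 1)) with hGdef

  have hQ1 : 0 < Q 1 := hQpos 1 one_pos
  have key : ∀ R : ℝ, 2 ≤ R →
      (∫ s in (R/2)..R, (deriv (f R) s)^2 * deriv V s) /
        (∫ s in (R/2)..R, (f R s)^2 * deriv V s) ≤ G R := by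
    intro R hR2
    have hR0 : (0:ℝ) < R := by linarith
    have hhalf : (1:ℝ) ≤ R/2 := by linarith
    have hle : R/2 ≤ R := by linarith
    have hfR : f R = fun s => Real.sin (2*π*(s-R/2)/R) / Real.sqrt (Stmt15.W a ω m s) :=
      funext fun s => hf R s
    set w := Stmt15.W a ω m with hwdef
    set w' := Stmt15.W' a ω m with hw'def
    set Bf := Stmt15.B a ω m with hBfdef
    set α := 2*π/R with hαdef
    have hα : 0 < α := by rw [hαdef]; positivity
    set cr := Real.cosh (a*(R/2))/Real.sinh (a*(R/2)) with hcrdef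
    have hsinh2 : 0 < Real.sinh (a*(R/2)) := Real.sinh_pos_iff.2 (by positivity)
    have hcr1 : (1:ℝ) ≤ cr := by
      rw [hcrdef, le_div_iff₀ hsinh2, one_mul]
      nlinarith [Real.cosh_sub_sinh (a*(R/2)), Real.exp_pos (-(a*(R/2)))]
    set μc := μ * cr with hμcdef
    have hμc : 0 < μc := by rw [hμcdef]; nlinarith
    have hmem : ∀ s ∈ Set.Icc (R/2) R, 0 < s := fun s hs => lt_of_lt_of_le (by linarith) hs.1
    have hθ0 : ∀ s ∈ Set.Icc (R/2) R, 0 ≤ 2*π*(s-R/2)/R := fun s hs =>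
      div_nonneg (by nlinarith [hs.1]) hR0.le
    have hθπ : ∀ s ∈ Set.Icc (R/2) R, 2*π*(s-R/2)/R ≤ π := fun s hs => by
      rw [div_le_iff₀ hR0]; nlinarith [hs.2]
    have hsin0 : ∀ s ∈ Set.Icc (R/2) R, 0 ≤ Real.sin (2*π*(s-R/2)/R) := fun s hs =>
      Real.sin_nonneg_of_nonneg_of_le_pi (hθ0 s hs) (hθπ s hs)
    have hβ : ∀ s ∈ Set.Icc (R/2) R, 0 ≤ w' s/(2*w s) ∧ w' s/(2*w s) ≤ μc := by
      intro s hs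
      have hs0 := hmem s hs
      have hw := hWpos s hs0
      constructor
      · exact div_nonneg (Stmt15.W'_nonneg ha hω hs0.le) (by linarith)
      · rw [div_le_iff₀ (by linarith : (0:ℝ) < 2*w s)]
        have hWle := Stmt15.W'_le (m := m) ha hω (show (0:ℝ) < R/2 by linarith) hs.1
        calc w' s ≤ ((m:ℝ)+1) * a * (Real.cosh (a*(R/2)) / Real.sinh (a*(R/2))) * w s := hWle
          _ = μc * (2 * w s) := by rw [hμcdef, ← hcrdef, hμdef]; ring
    -- derivative of f R
    have hfd : ∀ s ∈ Set.Icc (R/2) R, HasDerivAt (f R)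
        ((α * Real.cos (2*π*(s-R/2)/R) - Real.sin (2*π*(s-R/2)/R) * (w' s/(2 * w s)))
          / Real.sqrt (w s)) s := by
      intro s hs
      have hs0 := hmem s hs
      have hw := hWpos s hs0
      have hsq : 0 < Real.sqrt (w s) := Real.sqrt_pos.2 hw
      have hθd : HasDerivAt (fun s : ℝ => 2*π*(s-R/2)/R) α s := by
        have h := (((hasDerivAt_id s).sub_const (R/2)).const_mul (2*π)).div_const R
        simpa [hαdef] using h
      have hnum : HasDerivAt (fun s : ℝ => Real.sin (2*π*(s-R/2)/R))
          (Real.cos (2*π*(s-R/2)/R) * α) s := by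
        exact (Real.hasDerivAt_sin (2*π*(s-R/2)/R)).comp s hθd
      have hden : HasDerivAt (fun s : ℝ => Real.sqrt (w s)) (w' s / (2*Real.sqrt (w s))) s := by
        have h := (Real.hasDerivAt_sqrt hw.ne').comp s
          (Stmt15.hasDerivAt_W (ω := ω) (m := m) ha.ne' s)
        have h' : HasDerivAt (fun s => Real.sqrt (w s))
            ((Real.sqrt (w s))⁻¹ * 2⁻¹ * Stmt15.W' a ω m s) s := by
          simpa [Function.comp_def] using h
        have hval : w' s / (2*Real.sqrt (w s))
            = (Real.sqrt (w s))⁻¹ * 2⁻¹ * Stmt15.W' a ω m s := by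
          rw [hw'def]
          field_simp
        rw [hval]
        exact h'
      have hdiv := hnum.div hden hsq.ne'
      rw [hfR]
      refine hdiv.congr_deriv ?_
      have huu : Real.sqrt (w s) * Real.sqrt (w s) = w s := Real.mul_self_sqrt hw.le
      generalize hu2 : Real.sqrt (w s) = u at huu hsq ⊢
      rw [← huu]
      field_simp
    have hder_eq : ∀ s ∈ Set.Icc (R/2) R, deriv (f R) s =
        (α * Real.cos (2*π*(s-R/2)/R) - Real.sin (2*π*(s-R/2)/R) * (w' s/(2 * w s)))
          / Real.sqrt (w s) := fun s hs => (hfd s hs).deriv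
    -- integrability
    have hV'int : IntervalIntegrable (deriv V) MeasureTheory.volume (R/2) R := by
      apply intervalIntegrable_deriv_of_nonneg (g := V)
      · intro x hx
        rw [Set.uIcc_of_le hle] at hx
        exact ((hVdiff x (hmem x hx)).continuousAt).continuousWithinAt
      · intro x hx
        rw [min_eq_left hle, max_eq_right hle] at hx
        exact (hVdiff x (hmem x (Set.Ioo_subset_Icc_self hx))).hasDerivAt
      · intro x hx
        rw [min_eq_left hle, max_eq_right hle] at hx
        exact hV'0 x (hmem x (Set.Ioo_subset_Icc_self hx))
    have hqint : IntervalIntegrable q MeasureTheory.volume (R/2) R := by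
      apply intervalIntegrable_deriv_of_nonneg (g := Q)
      · intro x hx
        rw [Set.uIcc_of_le hle] at hx
        exact ((hQd x (hmem x hx)).differentiableAt.continuousAt).continuousWithinAt
      · intro x hx
        rw [min_eq_left hle, max_eq_right hle] at hx
        exact hQd x (hmem x (Set.Ioo_subset_Icc_self hx))
      · intro x hx
        rw [min_eq_left hle, max_eq_right hle] at hx
        exact hq0 x (hmem x (Set.Ioo_subset_Icc_self hx))
    have hV'Icc : MeasureTheory.IntegrableOn (deriv V) (Set.Icc (R/2) R) MeasureTheory.volume := by
      rw [integrableOn_Icc_iff_integrableOn_Ioc]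
      simpa [intervalIntegrable_iff, Set.uIoc_of_le hle] using hV'int
    have prodInt : ∀ g : ℝ → ℝ, ContinuousOn g (Set.Icc (R/2) R) →
        IntervalIntegrable (fun s => g s * deriv V s) MeasureTheory.volume (R/2) R := by
      intro g hg
      have h1 := MeasureTheory.IntegrableOn.continuousOn_mul hg hV'Icc isCompact_Icc
      rw [intervalIntegrable_iff, Set.uIoc_of_le hle]
      exact h1.mono_set Set.Ioc_subset_Icc_self
    -- continuity facts
    have hwcont : ContinuousOn w (Set.Icc (R/2) R) := (Stmt15.W_continuous ha.ne').continuousOn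
    have hw'cont : ContinuousOn w' (Set.Icc (R/2) R) := (Stmt15.W'_continuous ha.ne').continuousOn
    have hsqcont : ContinuousOn (fun s => Real.sqrt (w s)) (Set.Icc (R/2) R) :=
      (Real.continuous_sqrt.comp (Stmt15.W_continuous ha.ne')).continuousOn
    have hθc : Continuous (fun s : ℝ => 2*π*(s-R/2)/R) := by fun_prop
    have hsinc : Continuous (fun s : ℝ => Real.sin (2*π*(s-R/2)/R)) := Real.continuous_sin.comp hθc
    have hsqne : ∀ s ∈ Set.Icc (R/2) R, Real.sqrt (w s) ≠ 0 := fun s hs =>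
      (Real.sqrt_pos.2 (hWpos s (hmem s hs))).ne'
    have hwne : ∀ s ∈ Set.Icc (R/2) R, w s ≠ 0 := fun s hs => (hWpos s (hmem s hs)).ne'
    have hgD : ContinuousOn (fun s => (f R s)^2) (Set.Icc (R/2) R) := by
      rw [hfR]
      exact (hsinc.continuousOn.div hsqcont hsqne).pow 2
    have hg1W : ContinuousOn (fun s => (w s)⁻¹) (Set.Icc (R/2) R) := hwcont.inv₀ hwne
    set N := ∫ s in (R/2)..R, (deriv (f R) s)^2 * deriv V s with hNdef
    set D := ∫ s in (R/2)..R, (f R s)^2 * deriv V s with hDdef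
    set I0 := ∫ s in (R/2)..R, (w s)⁻¹ * deriv V s with hI0def
    -- lower bound on D
    have hDlow : Q 1 * (R/4) ≤ D := by
      rw [hDdef]
      have hint1 : IntervalIntegrable (fun s => Q 1 * Real.sin (2*π*(s-R/2)/R)^2)
          MeasureTheory.volume (R/2) R := (Continuous.intervalIntegrable (by fun_prop) _ _)
      have hint2 := prodInt _ hgD
      have hpt : ∀ s ∈ Set.Icc (R/2) R,
          Q 1 * Real.sin (2*π*(s-R/2)/R)^2 ≤ (f R s)^2 * deriv V s := by
        intro s hs
        have hs0 := hmem s hs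
        have hw := hWpos s hs0
        have hfsq : (f R s)^2 = Real.sin (2*π*(s-R/2)/R)^2 / w s := by
          rw [hf R s, div_pow, Real.sq_sqrt hw.le]
        rw [hfsq]
        have hVge : Q 1 * w s ≤ deriv V s := by
          rw [hderivV s hs0]
          have h1 : Q 1 ≤ Q s := hQmono (Set.mem_Ioi.2 one_pos) (Set.mem_Ioi.2 hs0)
            (le_trans hhalf hs.1)
          nlinarith [hq0 s hs0, (hBpos s hs0).le, hw]
        have heq : Q 1 * Real.sin (2*π*(s-R/2)/R)^2
            = (Real.sin (2*π*(s-R/2)/R)^2 / w s) * (Q 1 * w s) := by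
          field_simp
        rw [heq]
        exact mul_le_mul_of_nonneg_left hVge (by positivity)
      have hmono := intervalIntegral.integral_mono_on hle hint1 hint2 hpt
      calc Q 1 * (R/4) = ∫ s in (R/2)..R, Q 1 * Real.sin (2*π*(s-R/2)/R)^2 := by
            rw [intervalIntegral.integral_const_mul, Stmt15.integral_sin_sq hR0]
        _ ≤ _ := hmono
    have hD0 : 0 < D := lt_of_lt_of_le (by nlinarith) hDlow
    -- upper bound on I0
    have hI0up : I0 ≤ C/(2*μ) + C*(R/2) := by
      rw [hI0def]
      have hint1 := prodInt _ hg1W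
      have hint2 : IntervalIntegrable (fun s => q s * (1/(2*μ)) + C)
          MeasureTheory.volume (R/2) R := (hqint.mul_const _).add intervalIntegrable_const
      have hpt : ∀ s ∈ Set.Icc (R/2) R, (w s)⁻¹ * deriv V s ≤ q s * (1/(2*μ)) + C := by
        intro s hs
        have hs0 := hmem s hs
        have hw := hWpos s hs0
        rw [hderivV s hs0]
        have h2μ : 2*μ = ((m:ℝ)+1)*a := by rw [hμdef]; ring
        have hBW : Bf s ≤ w s * (1/(2*μ)) := by
          have hb := Stmt15.B_le (m := m) ha hω hs0.le
          rw [mul_one_div, le_div_iff₀ (by linarith : (0:ℝ) < 2*μ), h2μ]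
          linarith [hb]
        have hQC : Q s ≤ C := hC s hs0
        have hstep : (w s)⁻¹ * (q s * Bf s + Q s * w s)
            ≤ (w s)⁻¹ * (q s * (w s * (1/(2*μ))) + C * w s) := by
          apply mul_le_mul_of_nonneg_left _ (inv_nonneg.2 hw.le)
          have hq := hq0 s hs0
          nlinarith [hBW, hQC, hw]
        refine hstep.trans (le_of_eq ?_)
        field_simp
      have hmono := intervalIntegral.integral_mono_on hle hint1 hint2 hpt
      have hqeq : (∫ s in (R/2)..R, q s) = Q R - Q (R/2) := by
        apply intervalIntegral.integral_eq_sub_of_hasDerivAt _ hqint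
        intro x hx
        rw [Set.uIcc_of_le hle] at hx
        exact hQd x (hmem x hx)
      rw [intervalIntegral.integral_add (hqint.mul_const _) intervalIntegrable_const,
        intervalIntegral.integral_mul_const, hqeq, intervalIntegral.integral_const] at hmono
      have hQR : Q R ≤ C := hC R hR0
      have hQhalf : 0 < Q (R/2) := hQpos _ (by linarith)
      have hmul : (Q R - Q (R/2)) * (1/(2*μ)) ≤ C * (1/(2*μ)) :=
        mul_le_mul_of_nonneg_right (by linarith) (by positivity)
      have hsmul : (R - R/2) • C = C * (R/2) := by rw [smul_eq_mul]; ring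
      rw [hsmul] at hmono
      have hconv : C * (1/(2*μ)) = C/(2*μ) := by ring
      linarith [hmono, hmul]
    have hI0nn : (0:ℝ) ≤ I0 := by
      rw [hI0def]
      apply intervalIntegral.integral_nonneg hle
      intro u hu
      exact mul_nonneg (inv_nonneg.2 (hWpos u (hmem u hu)).le) (hV'0 u (hmem u hu))
    -- upper bound on N
    have hNle : N ≤ (α^2 + 2*α*μc) * I0 + μc^2 * D := by
      rw [hNdef, hI0def, hDdef]
      have hNeq : (∫ s in (R/2)..R, (deriv (f R) s)^2 * deriv V s)
          = ∫ s in (R/2)..R, ((α * Real.cos (2*π*(s-R/2)/R)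
              - Real.sin (2*π*(s-R/2)/R) * (w' s/(2 * w s))) / Real.sqrt (w s))^2
            * deriv V s := by
        apply intervalIntegral.integral_congr
        intro s hs
        rw [Set.uIcc_of_le hle] at hs
        simp only [hder_eq s hs]
      rw [hNeq]
      have hgN : ContinuousOn (fun s => ((α * Real.cos (2*π*(s-R/2)/R)
          - Real.sin (2*π*(s-R/2)/R) * (w' s/(2 * w s))) / Real.sqrt (w s))^2)
          (Set.Icc (R/2) R) := by
        apply ContinuousOn.pow
        apply ContinuousOn.div _ hsqcont hsqne
        apply ContinuousOn.sub
        · exact (continuous_const.mul (Real.continuous_cos.comp hθc)).continuousOn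
        · refine hsinc.continuousOn.mul (hw'cont.div
            ((continuous_const.mul (Stmt15.W_continuous ha.ne')).continuousOn) ?_)
          intro s hs
          have := hWpos s (hmem s hs)
          positivity
      have hint1 := prodInt _ hgN
      have hint2 : IntervalIntegrable (fun s => (α^2 + 2*α*μc) * ((w s)⁻¹ * deriv V s)
          + μc^2 * ((f R s)^2 * deriv V s)) MeasureTheory.volume (R/2) R :=
        ((prodInt _ hg1W).const_mul _).add ((prodInt _ hgD).const_mul _)
      have hpt : ∀ s ∈ Set.Icc (R/2) R,
          ((α * Real.cos (2*π*(s-R/2)/R)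
              - Real.sin (2*π*(s-R/2)/R) * (w' s/(2 * w s))) / Real.sqrt (w s))^2 * deriv V s
          ≤ (α^2 + 2*α*μc) * ((w s)⁻¹ * deriv V s) + μc^2 * ((f R s)^2 * deriv V s) := by
        intro s hs
        have hs0 := hmem s hs
        have hw := hWpos s hs0
        have hsq : 0 < Real.sqrt (w s) := Real.sqrt_pos.2 hw
        obtain ⟨hβ0, hβ1⟩ := hβ s hs
        have hs0' := hsin0 s hs
        have hs1' : Real.sin (2*π*(s-R/2)/R) ≤ 1 := Real.sin_le_one _
        have hc1 : Real.cos (2*π*(s-R/2)/R) ≤ 1 := Real.cos_le_one _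
        have hc2 : -1 ≤ Real.cos (2*π*(s-R/2)/R) := Real.neg_one_le_cos _
        have habs : |α * Real.cos (2*π*(s-R/2)/R)
            - Real.sin (2*π*(s-R/2)/R) * (w' s/(2*w s))|
            ≤ α + μc * Real.sin (2*π*(s-R/2)/R) := by
          have h1 : 0 ≤ α * (1 - Real.cos (2*π*(s-R/2)/R)) :=
            mul_nonneg hα.le (by linarith)
          have h2 : 0 ≤ Real.sin (2*π*(s-R/2)/R) * (w' s/(2*w s)) := mul_nonneg hs0' hβ0
          have h3 : 0 ≤ α * (1 + Real.cos (2*π*(s-R/2)/R)) :=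
            mul_nonneg hα.le (by linarith)
          have h4 : 0 ≤ Real.sin (2*π*(s-R/2)/R) * (μc - w' s/(2*w s)) :=
            mul_nonneg hs0' (by linarith)
          have h5 : 0 ≤ μc * Real.sin (2*π*(s-R/2)/R) := mul_nonneg hμc.le hs0'
          rw [abs_le]
          constructor <;> nlinarith [h1, h2, h3, h4, h5]
        have hsqle : (α * Real.cos (2*π*(s-R/2)/R)
            - Real.sin (2*π*(s-R/2)/R) * (w' s/(2*w s)))^2
            ≤ (α + μc * Real.sin (2*π*(s-R/2)/R))^2 := by
          rw [← sq_abs]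
          exact pow_le_pow_left₀ (abs_nonneg _) habs 2
        have hexp : (α + μc * Real.sin (2*π*(s-R/2)/R))^2
            ≤ (α^2 + 2*α*μc) + μc^2 * Real.sin (2*π*(s-R/2)/R)^2 := by
          nlinarith [mul_nonneg (mul_nonneg hα.le hμc.le) (sub_nonneg.2 hs1'),
            mul_pos hα hμc]
        have hfsq : (f R s)^2 = Real.sin (2*π*(s-R/2)/R)^2 / w s := by
          rw [hf R s, div_pow, Real.sq_sqrt hw.le]
        have hstep1 : ((α * Real.cos (2*π*(s-R/2)/R)
            - Real.sin (2*π*(s-R/2)/R) * (w' s/(2 * w s))) / Real.sqrt (w s))^2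
            = (α * Real.cos (2*π*(s-R/2)/R)
            - Real.sin (2*π*(s-R/2)/R) * (w' s/(2 * w s)))^2 / w s := by
          rw [div_pow, Real.sq_sqrt hw.le]
        rw [hstep1, hfsq]
        have hnum : (α * Real.cos (2*π*(s-R/2)/R)
            - Real.sin (2*π*(s-R/2)/R) * (w' s/(2 * w s)))^2
            ≤ (α^2 + 2*α*μc) + μc^2 * Real.sin (2*π*(s-R/2)/R)^2 :=
          le_trans hsqle hexp
        have hdivle := (div_le_div_iff_of_pos_right hw).2 hnum
        have hVnn := hV'0 s hs0
        calc (α * Real.cos (2*π*(s-R/2)/R)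
            - Real.sin (2*π*(s-R/2)/R) * (w' s/(2 * w s)))^2 / w s * deriv V s
            ≤ (((α^2 + 2*α*μc) + μc^2 * Real.sin (2*π*(s-R/2)/R)^2) / w s) * deriv V s :=
              mul_le_mul_of_nonneg_right hdivle hVnn
          _ = (α^2 + 2*α*μc) * ((w s)⁻¹ * deriv V s)
              + μc^2 * (Real.sin (2*π*(s-R/2)/R)^2 / w s * deriv V s) := by
              field_simp
      have hmono := intervalIntegral.integral_mono_on hle hint1 hint2 hpt
      rw [intervalIntegral.integral_add ((prodInt _ hg1W).const_mul _)
          ((prodInt _ hgD).const_mul _),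
        intervalIntegral.integral_const_mul, intervalIntegral.integral_const_mul] at hmono
      exact hmono
    -- final assembly
    have hnum_nn : (0:ℝ) ≤ C/(2*μ) + C*(R/2) := by
      have h1 : 0 < C/(2*μ) := div_pos hCpos (by linarith)
      nlinarith
    have hden_pos : 0 < Q 1 * (R/4) := by nlinarith
    have hcoef_nn : (0:ℝ) ≤ α^2 + 2*α*μc := by nlinarith [mul_pos hα hμc]
    have hfrac : (C/(2*μ) + C*(R/2))/(Q 1 * (R/4)) = ((C/(2*μ))/R + C/2) * (4/(Q 1)) := by
      field_simp
    calc N / D ≤ ((α^2 + 2*α*μc) * I0 + μc^2 * D)/D := (div_le_div_iff_of_pos_right hD0).2 hNle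
      _ = μc^2 + (α^2 + 2*α*μc) * (I0/D) := by field_simp; ring
      _ ≤ μc^2 + (α^2 + 2*α*μc) * ((C/(2*μ) + C*(R/2))/(Q 1 * (R/4))) := by
          apply add_le_add_right
          exact mul_le_mul_of_nonneg_left (div_le_div₀ hnum_nn hI0up hden_pos hDlow) hcoef_nn
      _ = G R := by
          rw [hfrac, hGdef, hμcdef, hcrdef, hαdef]
          ring
  have keypos : ∀ R : ℝ, 2 ≤ R →
      0 ≤ (∫ s in (R/2)..R, (deriv (f R) s)^2 * deriv V s) /
        (∫ s in (R/2)..R, (f R s)^2 * deriv V s) := by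
    intro R hR
    have hle : R/2 ≤ R := by linarith
    apply div_nonneg <;>
    · apply intervalIntegral.integral_nonneg hle
      intro u hu
      have hu0 : 0 < u := lt_of_lt_of_le (by linarith) hu.1
      exact mul_nonneg (sq_nonneg _) (hV'0 u hu0)
  -- endgame
  have hGtend : Filter.Tendsto G Filter.atTop (nhds (μ^2)) := by
    have h1 : Filter.Tendsto (fun R : ℝ => a*(R/2)) Filter.atTop Filter.atTop :=
      (Filter.tendsto_id.atTop_div_const two_pos).const_mul_atTop ha
    have hcr : Filter.Tendsto (fun R : ℝ => Real.cosh (a*(R/2))/Real.sinh (a*(R/2)))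
        Filter.atTop (nhds 1) := Stmt15.tendsto_coth.comp h1
    have hinv : Filter.Tendsto (fun R : ℝ => 2*π/R) Filter.atTop (nhds 0) :=
      tendsto_const_nhds.div_atTop Filter.tendsto_id
    have hinv2 : Filter.Tendsto (fun R : ℝ => (C/(2*μ))/R) Filter.atTop (nhds 0) :=
      tendsto_const_nhds.div_atTop Filter.tendsto_id
    have hmain : Filter.Tendsto G Filter.atTop
        (nhds ((μ * 1)^2 + (0^2 + 2*0*μ*1) * (0 + C/2) * (4/(Q 1)))) := by
      apply Filter.Tendsto.add
      · exact (tendsto_const_nhds.mul hcr).pow 2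
      · exact ((((hinv.pow 2).add (((hinv.const_mul 2).mul tendsto_const_nhds).mul hcr)).mul
          (hinv2.add tendsto_const_nhds)).mul tendsto_const_nhds)
    simpa using hmain
  have hgoal : -(((m:ℝ)+2) - 1)^2 * κ / 4 = μ^2 := by
    rw [hμdef]
    have : a^2 + κ = 0 := by linarith [ha2]
    nlinarith [this]
  have hev : ∀ᶠ R in Filter.atTop, (fun R =>
      (∫ s in (R/2)..R, (deriv (f R) s)^2 * deriv V s) /
        (∫ s in (R/2)..R, (f R s)^2 * deriv V s)) R ≤ G R := by
    filter_upwards [Filter.eventually_ge_atTop 2] with R hR using key R hR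
  have hbddG : Filter.IsBoundedUnder (· ≤ ·) Filter.atTop G := hGtend.isBoundedUnder_le
  have hbddu := hbddG.mono_le hev
  have hcob : Filter.IsCoboundedUnder (· ≤ ·) Filter.atTop (fun R =>
      (∫ s in (R/2)..R, (deriv (f R) s)^2 * deriv V s) /
        (∫ s in (R/2)..R, (f R s)^2 * deriv V s)) := by
    apply Filter.IsBoundedUnder.isCoboundedUnder_le
    apply Filter.isBoundedUnder_of_eventually_ge (a := (0:ℝ))
    filter_upwards [Filter.eventually_ge_atTop 2] with R hR using keypos R hR
  have hfinal := Filter.limsup_le_limsup hev hcob hbddG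
  rw [hGtend.limsup_eq] at hfinal
  have : -((↑(m+2):ℝ) - 1)^2 * κ / 4 = μ^2 := by push_cast; exact hgoal
  rw [this]
  exact hfinal
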